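/- The generalized Smolin state admits the closed-form Bell decomposition: for every n ≥ 2, (1/4^n)(I + X^{⊗2n})(I + Z^{⊗2n}) = (1/4^{n−1}) ∑ ⊗_{i=1}^{n} |Φ_{α_i β_i}⟩⟨Φ_{α_i β_i}|, where the sum ranges over all (α_1,…,α_n), (β_1,…,β_n) ∈ {0,1}^n satisfying α_1 ⊕ ⋯ ⊕ α_n = 0 and β_1 ⊕ ⋯ ⊕ β_n = 0 (⊕ addition modulo 2), and the i-th Bell projector acts on qubits 2i−1, 2i. -/

import Mathlib

open Matrix Kronecker

/-- The qubit Pauli `X = |0⟩⟨1| + |1⟩⟨0|`. -/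
def qubitX : Matrix (Fin 2) (Fin 2) ℂ := !![0, 1; 1, 0]

/-- The qubit Pauli `Z = |0⟩⟨0| - |1⟩⟨1|`. -/
def qubitZ : Matrix (Fin 2) (Fin 2) ℂ := !![1, 0; 0, -1]

/-- The Bell states. -/
noncomputable def bell (α β : Fin 2) : Fin 2 × Fin 2 → ℂ := fun p =>
  ((Real.sqrt 2 : ℂ))⁻¹ *
    (if p = (0, α) then 1 else if p = (1, α + 1) then (-1 : ℂ) ^ (β : ℕ) else 0)

/-- The Bell projector `|Φ_{αβ}⟩⟨Φ_{αβ}|`. -/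
noncomputable def bellProj (α β : Fin 2) : Matrix (Fin 2 × Fin 2) (Fin 2 × Fin 2) ℂ :=
  vecMulVec (bell α β) (star (bell α β))

/-- The `2n`-fold tensor power `M^{⊗2n}` of a one-qubit matrix, acting on
`(ℂ²)^{⊗2n} ≅ ℂ^{Fin n → Fin 2 × Fin 2}` with qubits paired as `(2i-1, 2i)`. -/
def pairedTensorPow (n : ℕ) (M : Matrix (Fin 2) (Fin 2) ℂ) :
    Matrix (Fin n → Fin 2 × Fin 2) (Fin n → Fin 2 × Fin 2) ℂ :=
  Matrix.of fun x y => ∏ i, (M ⊗ₖ M) (x i) (y i)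


noncomputable def cval (α β : Fin 2) (p : Fin 2 × Fin 2) : ℂ :=
  if p = (0, α) then 1 else if p = (1, α + 1) then (-1 : ℂ) ^ (β : ℕ) else 0

lemma sqrt2_inv_sq : ((Real.sqrt 2 : ℂ))⁻¹ * ((Real.sqrt 2 : ℂ))⁻¹ = 1 / 2 := by
  rw [← mul_inv, ← Complex.ofReal_mul, Real.mul_self_sqrt (by norm_num)]
  norm_num

lemma star_cval (α β : Fin 2) (p) : star (cval α β p) = cval α β p := by
  unfold cval; split_ifs <;> simp

lemma bellProj_apply (α β : Fin 2) (x y) :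
    bellProj α β x y = (1 / 2) * (cval α β x * cval α β y) := by
  have hb : ∀ p, bell α β p = ((Real.sqrt 2 : ℂ))⁻¹ * cval α β p := fun _ => rfl
  rw [bellProj, vecMulVec_apply, Pi.star_apply, hb, hb, star_mul', star_cval]
  have hs : star (((Real.sqrt 2 : ℝ) : ℂ))⁻¹ = ((Real.sqrt 2 : ℂ))⁻¹ := by
    simp [Complex.star_def, Complex.conj_ofReal]
  rw [hs, ← sqrt2_inv_sq]; ring

noncomputable def pauliPair (a b : Fin 2) : Matrix (Fin 2 × Fin 2) (Fin 2 × Fin 2) ℂ :=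
  (qubitZ ^ (a : ℕ) * qubitX ^ (b : ℕ)) ⊗ₖ (qubitZ ^ (a : ℕ) * qubitX ^ (b : ℕ))


lemma pauliPair_apply (a b : Fin 2) (c d c' d' : Fin 2) :
    pauliPair a b (c, d) (c', d') =
      ((-1:ℂ) ^ ((a:ℕ) * ((c:ℕ) + (d:ℕ)))) * (if c' = c + b then 1 else 0) *
        (if d' = d + b then 1 else 0) := by
  fin_cases a <;> fin_cases b <;> fin_cases c <;> fin_cases d <;> fin_cases c' <;> fin_cases d' <;>
    simp [pauliPair, qubitX, qubitZ, Matrix.mul_apply, Fin.sum_univ_two,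
      Matrix.kroneckerMap_apply]

lemma cval_eq (α β : Fin 2) (c d : Fin 2) :
    cval α β (c, d) = (if d = α + c then 1 else 0) * (-1:ℂ)^((β:ℕ) * (c:ℕ)) := by
  fin_cases α <;> fin_cases β <;> fin_cases c <;> fin_cases d <;>
    simp [cval, Prod.ext_iff]

lemma bellProj_expand (α β : Fin 2) (x y : Fin 2 × Fin 2) :
    bellProj α β x y =
      (1 / 4) * ∑ a : Fin 2, ∑ b : Fin 2,
        (-1 : ℂ) ^ ((a : ℕ) * (α : ℕ) + (b : ℕ) * (β : ℕ)) * pauliPair a b x y := by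
  obtain ⟨c, d⟩ := x; obtain ⟨c', d'⟩ := y
  rw [bellProj_apply, cval_eq, cval_eq]
  simp only [Fin.sum_univ_two, pauliPair_apply]
  revert α β c d c' d'
  simp only [Fin.forall_fin_two]
  simp only [Fin.reduceAdd, Fin.reduceEq, ite_true, ite_false, if_true, if_false]
  norm_num

noncomputable def pp (n : ℕ) (M : Matrix (Fin 2 × Fin 2) (Fin 2 × Fin 2) ℂ) :
    Matrix (Fin n → Fin 2 × Fin 2) (Fin n → Fin 2 × Fin 2) ℂ :=
  Matrix.of fun x y => ∏ i, M (x i) (y i)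

lemma pp_one (n : ℕ) : pp n 1 = 1 := by
  ext x y
  rcases eq_or_ne x y with h | h
  · subst h
    show (∏ i, (1 : Matrix (Fin 2 × Fin 2) (Fin 2 × Fin 2) ℂ) (x i) (x i)) = (1 : Matrix _ _ ℂ) x x
    simp [Matrix.one_apply_eq]
  · obtain ⟨i, hi⟩ := Function.ne_iff.mp h
    show (∏ i, (1 : Matrix (Fin 2 × Fin 2) (Fin 2 × Fin 2) ℂ) (x i) (y i)) = (1 : Matrix _ _ ℂ) x y
    rw [Matrix.one_apply_ne h]
    exact Finset.prod_eq_zero (Finset.mem_univ i) (Matrix.one_apply_ne hi)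

lemma pp_mul (n : ℕ) (M N : Matrix (Fin 2 × Fin 2) (Fin 2 × Fin 2) ℂ) :
    pp n M * pp n N = pp n (M * N) := by
  ext x y
  rw [Matrix.mul_apply]
  simp only [pp, Matrix.of_apply]
  simp_rw [← Finset.prod_mul_distrib, Matrix.mul_apply]
  exact (Fintype.prod_sum fun i w => M (x i) w * N w (y i)).symm

lemma lhs_expand (n : ℕ) :
    (1 + pairedTensorPow n qubitX) * (1 + pairedTensorPow n qubitZ) =
      ∑ a : Fin 2, ∑ b : Fin 2, pp n (pauliPair a b) := by
  have hX : pairedTensorPow n qubitX = pp n (qubitX ⊗ₖ qubitX) := rfl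
  have hZ : pairedTensorPow n qubitZ = pp n (qubitZ ⊗ₖ qubitZ) := rfl
  have hcomm : qubitX * qubitZ = -(qubitZ * qubitX) := by
    ext i j
    fin_cases i <;> fin_cases j <;>
      simp [qubitX, qubitZ, Matrix.mul_apply, Fin.sum_univ_two]
  have hXZ : (qubitX ⊗ₖ qubitX) * (qubitZ ⊗ₖ qubitZ) = pauliPair 1 1 := by
    rw [← Matrix.mul_kronecker_mul, hcomm, pauliPair]
    have : (-(qubitZ * qubitX)) ⊗ₖ (-(qubitZ * qubitX)) =
        (qubitZ * qubitX) ⊗ₖ (qubitZ * qubitX) := by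
      ext ⟨i, j⟩ ⟨k, l⟩
      simp [Matrix.kroneckerMap_apply]
    rw [this]
    norm_num
  have p00 : pauliPair 0 0 = 1 := by
    simp [pauliPair, Matrix.one_kronecker_one]
  have p01 : pauliPair 0 1 = qubitX ⊗ₖ qubitX := by simp [pauliPair]
  have p10 : pauliPair 1 0 = qubitZ ⊗ₖ qubitZ := by simp [pauliPair]
  rw [Fin.sum_univ_two, Fin.sum_univ_two, Fin.sum_univ_two, p00, p01, p10, pp_one]
  rw [hX, hZ]
  simp only [add_mul, mul_add, one_mul, mul_one, pp_mul, hXZ]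

open Fin.NatCast Fin.CommRing in
lemma prod_neg_one_pow {n : ℕ} (α : Fin n → Fin 2) :
    ∏ i, (-1 : ℂ) ^ (α i : ℕ) = if (∑ i, α i) = 0 then 1 else -1 := by
  rw [Finset.prod_pow_eq_pow_sum]
  have hcast : (∑ i, α i) = ((∑ i, (α i : ℕ) : ℕ) : Fin 2) := by
    rw [Nat.cast_sum]
    exact Finset.sum_congr rfl fun i _ => (Fin.cast_val_eq_self (α i)).symm
  rw [hcast]
  simp only [Fin.natCast_eq_zero]
  by_cases h : 2 ∣ ∑ i, (α i : ℕ)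
  · rw [if_pos h]
    exact Even.neg_one_pow (Nat.even_iff.mpr (Nat.dvd_iff_mod_eq_zero.mp h))
  · rw [if_neg h]
    exact Odd.neg_one_pow (Nat.odd_iff.mpr (by omega))

lemma full_char_sum {n : ℕ} (g : Fin n → Fin 2) :
    ∑ α : Fin n → Fin 2, ∏ i, (-1 : ℂ) ^ ((g i : ℕ) * (α i : ℕ)) =
      if g = 0 then (2 : ℂ) ^ n else 0 := by
  rw [← Fintype.prod_sum fun (i : Fin n) (t : Fin 2) => (-1 : ℂ) ^ ((g i : ℕ) * (t : ℕ))]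
  have h1 : ∀ i, (∑ t : Fin 2, (-1 : ℂ) ^ ((g i : ℕ) * (t : ℕ)))
      = 2 * (if g i = 0 then 1 else 0) := by
    intro i
    obtain ⟨k, hk⟩ : ∃ k, g i = k := ⟨_, rfl⟩
    rw [hk, Fin.sum_univ_two]
    fin_cases k <;> norm_num
  rw [Finset.prod_congr rfl fun i _ => h1 i, Finset.prod_mul_distrib, Finset.prod_const,
    Fintype.prod_boole]
  simp [funext_iff]

lemma neg_pow_fact : ∀ u t : Fin 2,
    (-1 : ℂ) ^ (t : ℕ) * (-1 : ℂ) ^ ((u : ℕ) * (t : ℕ)) =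
      (-1 : ℂ) ^ (((u + 1 : Fin 2) : ℕ) * (t : ℕ)) := by
  simp only [Fin.forall_fin_two]
  norm_num [show ((1 + 1 : Fin 2) : ℕ) = 0 from rfl, show ((2 : Fin 2) : ℕ) = 0 from rfl]

lemma char_sum {n : ℕ} (hn : 1 ≤ n) (a : Fin n → Fin 2) :
    ∑ α : Fin n → Fin 2,
      (if (∑ i, α i) = 0 then (1 : ℂ) else 0) * ∏ i, (-1 : ℂ) ^ ((a i : ℕ) * (α i : ℕ)) =
      2 ^ (n - 1) * ((if a = 0 then (1 : ℂ) else 0) + (if a = 1 then 1 else 0)) := by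
  have key : ∀ α : Fin n → Fin 2,
      (if (∑ i, α i) = 0 then (1 : ℂ) else 0) * ∏ i, (-1 : ℂ) ^ ((a i : ℕ) * (α i : ℕ))
      = (1/2) * ∏ i, (-1 : ℂ) ^ ((a i : ℕ) * (α i : ℕ))
        + (1/2) * ∏ i, (-1 : ℂ) ^ (((a i + 1 : Fin 2) : ℕ) * (α i : ℕ)) := by
    intro α
    have hP : (∏ i, (-1 : ℂ) ^ (α i : ℕ)) * ∏ i, (-1 : ℂ) ^ ((a i : ℕ) * (α i : ℕ))
        = ∏ i, (-1 : ℂ) ^ (((a i + 1 : Fin 2) : ℕ) * (α i : ℕ)) := by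
      rw [← Finset.prod_mul_distrib]
      exact Finset.prod_congr rfl fun i _ => neg_pow_fact (a i) (α i)
    have hI : (if (∑ i, α i) = 0 then (1 : ℂ) else 0)
        = (1/2) * (1 + ∏ i, (-1 : ℂ) ^ (α i : ℕ)) := by
      rw [prod_neg_one_pow]
      split_ifs <;> norm_num
    rw [hI, ← hP]
    ring
  rw [Finset.sum_congr rfl fun α _ => key α, Finset.sum_add_distrib,
    ← Finset.mul_sum, ← Finset.mul_sum, full_char_sum a,
    full_char_sum (fun i => a i + 1)]
  have hcond : ((fun i => a i + 1) = (0 : Fin n → Fin 2)) ↔ a = 1 := by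
    simp only [funext_iff, Pi.zero_apply, Pi.one_apply]
    have hk : ∀ k : Fin 2, (k + 1 = 0 ↔ k = 1) := by decide
    exact forall_congr' fun i => hk (a i)
  simp only [hcond]
  have h2 : (2 : ℂ) ^ n = 2 * 2 ^ (n - 1) := by
    rw [← pow_succ']
    congr 1
    omega
  have hne : (0 : Fin n → Fin 2) ≠ 1 := fun h => by
    have := congrFun h ⟨0, by omega⟩
    simp at this
  split_ifs with h1 h2' <;> first
    | (exact absurd (h1.symm.trans h2') hne)
    | (rw [h2]; ring)
    | ring

lemma hprod_lemma (n : ℕ) (x y : Fin n → Fin 2 × Fin 2) (α β : Fin n → Fin 2) :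
    ∏ i, bellProj (α i) (β i) (x i) (y i)
    = (1/4 : ℂ)^n * ∑ A : Fin n → Fin 2, ∑ B : Fin n → Fin 2,
        (∏ i, (-1:ℂ)^((A i : ℕ) * (α i : ℕ))) *
          ((∏ i, (-1:ℂ)^((B i : ℕ) * (β i : ℕ))) *
            ∏ i, pauliPair (A i) (B i) (x i) (y i)) := by
  calc ∏ i, bellProj (α i) (β i) (x i) (y i)
      = ∏ i, ((1/4 : ℂ) * ∑ a : Fin 2, ∑ b : Fin 2,
          (-1:ℂ)^((a : ℕ) * (α i : ℕ) + (b : ℕ) * (β i : ℕ)) * pauliPair a b (x i) (y i)) :=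
        Finset.prod_congr rfl fun i _ => bellProj_expand (α i) (β i) (x i) (y i)
    _ = (1/4 : ℂ)^n * ∏ i, ∑ a : Fin 2, ∑ b : Fin 2,
          (-1:ℂ)^((a : ℕ) * (α i : ℕ) + (b : ℕ) * (β i : ℕ)) * pauliPair a b (x i) (y i) := by
        rw [Finset.prod_mul_distrib, Finset.prod_const, Finset.card_univ, Fintype.card_fin]
    _ = (1/4 : ℂ)^n * ∑ A : Fin n → Fin 2, ∏ i, ∑ b : Fin 2,
          (-1:ℂ)^((A i : ℕ) * (α i : ℕ) + (b : ℕ) * (β i : ℕ)) * pauliPair (A i) b (x i) (y i) := by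
        rw [Fintype.prod_sum (fun (i : Fin n) (a : Fin 2) => ∑ b : Fin 2,
          (-1:ℂ)^((a : ℕ) * (α i : ℕ) + (b : ℕ) * (β i : ℕ)) * pauliPair a b (x i) (y i))]
    _ = (1/4 : ℂ)^n * ∑ A : Fin n → Fin 2, ∑ B : Fin n → Fin 2, ∏ i,
          (-1:ℂ)^((A i : ℕ) * (α i : ℕ) + (B i : ℕ) * (β i : ℕ)) * pauliPair (A i) (B i) (x i) (y i) := by
        refine congrArg _ (Finset.sum_congr rfl fun A _ => ?_)
        exact Fintype.prod_sum (fun (i : Fin n) (b : Fin 2) =>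
          (-1:ℂ)^((A i : ℕ) * (α i : ℕ) + (b : ℕ) * (β i : ℕ)) * pauliPair (A i) b (x i) (y i))
    _ = _ := by
        refine congrArg _ (Finset.sum_congr rfl fun A _ => Finset.sum_congr rfl fun B _ => ?_)
        simp_rw [pow_add, mul_assoc]
        rw [Finset.prod_mul_distrib, Finset.prod_mul_distrib]

lemma swap4 {γ : Type*} [Fintype γ] [DecidableEq γ] (f : γ → γ → γ → γ → ℂ) :
    ∑ α : γ, ∑ β : γ, ∑ A : γ, ∑ B : γ, f α β A B
      = ∑ A : γ, ∑ B : γ, ∑ α : γ, ∑ β : γ, f α β A B := by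
  calc ∑ α : γ, ∑ β : γ, ∑ A : γ, ∑ B : γ, f α β A B
      = ∑ α : γ, ∑ A : γ, ∑ β : γ, ∑ B : γ, f α β A B :=
        Finset.sum_congr rfl fun α _ => Finset.sum_comm
    _ = ∑ A : γ, ∑ α : γ, ∑ β : γ, ∑ B : γ, f α β A B := Finset.sum_comm
    _ = ∑ A : γ, ∑ α : γ, ∑ B : γ, ∑ β : γ, f α β A B :=
        Finset.sum_congr rfl fun A _ => Finset.sum_congr rfl fun α _ => Finset.sum_comm
    _ = ∑ A : γ, ∑ B : γ, ∑ α : γ, ∑ β : γ, f α β A B :=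
        Finset.sum_congr rfl fun A _ => Finset.sum_comm

lemma factor2 {γ : Type*} [Fintype γ] (c P : ℂ) (f g : γ → ℂ) :
    ∑ α : γ, ∑ β : γ, c * (f α * (g β * P)) = c * ((∑ α : γ, f α) * ((∑ β : γ, g β) * P)) := by
  calc ∑ α : γ, ∑ β : γ, c * (f α * (g β * P))
      = ∑ α : γ, ∑ β : γ, (f α * (c * P)) * g β :=
        Finset.sum_congr rfl fun α _ => Finset.sum_congr rfl fun β _ => by ring
    _ = ∑ α : γ, (f α * (c * P)) * ∑ β : γ, g β :=
        Finset.sum_congr rfl fun α _ => (Finset.mul_sum _ _ _).symm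
    _ = (∑ α : γ, f α * (c * P)) * ∑ β : γ, g β := (Finset.sum_mul _ _ _).symm
    _ = ((∑ α : γ, f α) * (c * P)) * ∑ β : γ, g β := by rw [← Finset.sum_mul]
    _ = c * ((∑ α : γ, f α) * ((∑ β : γ, g β) * P)) := by ring

lemma big (n : ℕ) (hn1 : 1 ≤ n) (x y : Fin n → Fin 2 × Fin 2) :
    ∑ α : Fin n → Fin 2, ∑ β : Fin n → Fin 2,
      ((if (∑ i, α i) = 0 then (1:ℂ) else 0) * (if (∑ i, β i) = 0 then (1:ℂ) else 0) *
        ∏ i, bellProj (α i) (β i) (x i) (y i))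
    = (1/4 : ℂ)^n * 4^(n-1) *
        ∑ a : Fin 2, ∑ b : Fin 2, ∏ i, pauliPair a b (x i) (y i) := by
  have h4 : (2:ℂ)^(n-1) * 2^(n-1) = 4^(n-1) := by rw [← mul_pow]; norm_num
  have sel : ∀ (c : Fin n → Fin 2) (h : (Fin n → Fin 2) → ℂ),
      (∑ A : Fin n → Fin 2, (if A = c then (1:ℂ) else 0) * h A) = h c := by
    intro c h
    simp [boole_mul, Finset.sum_ite_eq']
  calc ∑ α : Fin n → Fin 2, ∑ β : Fin n → Fin 2,
      ((if (∑ i, α i) = 0 then (1:ℂ) else 0) * (if (∑ i, β i) = 0 then (1:ℂ) else 0) *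
        ∏ i, bellProj (α i) (β i) (x i) (y i))
      = ∑ α : Fin n → Fin 2, ∑ β : Fin n → Fin 2, ∑ A : Fin n → Fin 2, ∑ B : Fin n → Fin 2,
          ((1/4 : ℂ)^n *
            (((if (∑ i, α i) = 0 then (1:ℂ) else 0) * ∏ i, (-1:ℂ)^((A i : ℕ) * (α i : ℕ))) *
             (((if (∑ i, β i) = 0 then (1:ℂ) else 0) * ∏ i, (-1:ℂ)^((B i : ℕ) * (β i : ℕ))) *
              ∏ i, pauliPair (A i) (B i) (x i) (y i)))) := by
        refine Finset.sum_congr rfl fun α _ => Finset.sum_congr rfl fun β _ => ?_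
        rw [hprod_lemma n x y α β]
        simp_rw [Finset.mul_sum]
        exact Finset.sum_congr rfl fun A _ => Finset.sum_congr rfl fun B _ => by ring
    _ = ∑ A : Fin n → Fin 2, ∑ B : Fin n → Fin 2, ∑ α : Fin n → Fin 2, ∑ β : Fin n → Fin 2,
          ((1/4 : ℂ)^n *
            (((if (∑ i, α i) = 0 then (1:ℂ) else 0) * ∏ i, (-1:ℂ)^((A i : ℕ) * (α i : ℕ))) *
             (((if (∑ i, β i) = 0 then (1:ℂ) else 0) * ∏ i, (-1:ℂ)^((B i : ℕ) * (β i : ℕ))) *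
              ∏ i, pauliPair (A i) (B i) (x i) (y i)))) := by
        exact swap4 _
    _ = ∑ A : Fin n → Fin 2, ∑ B : Fin n → Fin 2,
          ((1/4 : ℂ)^n *
            ((∑ α : Fin n → Fin 2, (if (∑ i, α i) = 0 then (1:ℂ) else 0) *
                ∏ i, (-1:ℂ)^((A i : ℕ) * (α i : ℕ))) *
             ((∑ β : Fin n → Fin 2, (if (∑ i, β i) = 0 then (1:ℂ) else 0) *
                ∏ i, (-1:ℂ)^((B i : ℕ) * (β i : ℕ))) *
              ∏ i, pauliPair (A i) (B i) (x i) (y i)))) := by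
        refine Finset.sum_congr rfl fun A _ => Finset.sum_congr rfl fun B _ => ?_
        exact factor2 _ _ _ _
    _ = ∑ A : Fin n → Fin 2, ∑ B : Fin n → Fin 2,
          ((1/4 : ℂ)^n *
            ((2^(n-1) * ((if A = 0 then (1:ℂ) else 0) + (if A = 1 then 1 else 0))) *
             ((2^(n-1) * ((if B = 0 then (1:ℂ) else 0) + (if B = 1 then 1 else 0))) *
              ∏ i, pauliPair (A i) (B i) (x i) (y i)))) := by
        refine Finset.sum_congr rfl fun A _ => Finset.sum_congr rfl fun B _ => ?_
        rw [char_sum hn1 A, char_sum hn1 B]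
    _ = (1/4 : ℂ)^n * 4^(n-1) *
          ∑ A : Fin n → Fin 2, ∑ B : Fin n → Fin 2,
            (((if A = 0 then (1:ℂ) else 0) + (if A = 1 then 1 else 0)) *
             (((if B = 0 then (1:ℂ) else 0) + (if B = 1 then 1 else 0)) *
              ∏ i, pauliPair (A i) (B i) (x i) (y i))) := by
        simp_rw [Finset.mul_sum]
        refine Finset.sum_congr rfl fun A _ => Finset.sum_congr rfl fun B _ => ?_
        rw [← h4]; ring
    _ = (1/4 : ℂ)^n * 4^(n-1) *
          ∑ a : Fin 2, ∑ b : Fin 2, ∏ i, pauliPair a b (x i) (y i) := by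
        refine congrArg _ ?_
        have expand : ∀ A B : Fin n → Fin 2,
            (((if A = 0 then (1:ℂ) else 0) + (if A = 1 then 1 else 0)) *
             (((if B = 0 then (1:ℂ) else 0) + (if B = 1 then 1 else 0)) *
              ∏ i, pauliPair (A i) (B i) (x i) (y i)))
            = (if A = 0 then (1:ℂ) else 0) * ((if B = 0 then (1:ℂ) else 0) *
                ∏ i, pauliPair (A i) (B i) (x i) (y i))
              + (if A = 0 then (1:ℂ) else 0) * ((if B = 1 then (1:ℂ) else 0) *
                ∏ i, pauliPair (A i) (B i) (x i) (y i))
              + (if A = 1 then (1:ℂ) else 0) * ((if B = 0 then (1:ℂ) else 0) *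
                ∏ i, pauliPair (A i) (B i) (x i) (y i))
              + (if A = 1 then (1:ℂ) else 0) * ((if B = 1 then (1:ℂ) else 0) *
                ∏ i, pauliPair (A i) (B i) (x i) (y i)) := fun A B => by ring
        have sel2 : ∀ (c c' : Fin n → Fin 2) (h : (Fin n → Fin 2) → (Fin n → Fin 2) → ℂ),
            (∑ A : Fin n → Fin 2, ∑ B : Fin n → Fin 2,
              (if A = c then (1:ℂ) else 0) * ((if B = c' then (1:ℂ) else 0) * h A B)) = h c c' := by
          intro c c' h
          have hinner : ∀ A, (∑ B : Fin n → Fin 2,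
              (if A = c then (1:ℂ) else 0) * ((if B = c' then (1:ℂ) else 0) * h A B))
              = (if A = c then (1:ℂ) else 0) * h A c' := fun A => by
            rw [← Finset.mul_sum, sel c' (h A)]
          rw [Finset.sum_congr rfl fun A _ => hinner A, sel c (fun A => h A c')]
        simp_rw [expand, Finset.sum_add_distrib]
        rw [sel2 0 0, sel2 0 1, sel2 1 0, sel2 1 1]
        simp only [Pi.zero_apply, Pi.one_apply, Fin.sum_univ_two]
        ring

/-- Closed-form Bell decomposition of the generalized Smolin state: for `n ≥ 2`,
`(1/4ⁿ)(I + X^{⊗2n})(I + Z^{⊗2n})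
  = (1/4^{n-1}) ∑_{⊕α_i = ⊕β_i = 0} ⊗_{i=1}^n |Φ_{α_i β_i}⟩⟨Φ_{α_i β_i}|`,
where the `i`-th Bell projector acts on qubits `2i-1, 2i`. -/
theorem generalized_smolin_bell_decomposition (n : ℕ) (hn : 2 ≤ n) :
    (1 / 4 ^ n : ℂ) • ((1 + pairedTensorPow n qubitX) * (1 + pairedTensorPow n qubitZ)) =
      (1 / 4 ^ (n - 1) : ℂ) •
        ∑ α : Fin n → Fin 2, ∑ β : Fin n → Fin 2,
          if (∑ i, α i) = 0 ∧ (∑ i, β i) = 0 then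
            Matrix.of fun x y : Fin n → Fin 2 × Fin 2 =>
              ∏ i, bellProj (α i) (β i) (x i) (y i)
          else 0 := by
  have hn1 : 1 ≤ n := le_trans one_le_two hn
  rw [lhs_expand n]
  ext x y
  simp only [Matrix.smul_apply, smul_eq_mul, Matrix.sum_apply]
  have hite : ∀ α β : Fin n → Fin 2,
      (if (∑ i, α i) = 0 ∧ (∑ i, β i) = 0 then
          (Matrix.of fun x y : Fin n → Fin 2 × Fin 2 =>
            ∏ i, bellProj (α i) (β i) (x i) (y i))
        else 0) x y
      = (if (∑ i, α i) = 0 then (1:ℂ) else 0) * (if (∑ i, β i) = 0 then (1:ℂ) else 0) *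
          ∏ i, bellProj (α i) (β i) (x i) (y i) := by
    intro α β
    by_cases h1 : (∑ i, α i) = 0 <;> by_cases h2 : (∑ i, β i) = 0 <;> simp [h1, h2]
  rw [Finset.sum_congr rfl fun α (_ : α ∈ Finset.univ) =>
    Finset.sum_congr rfl fun β (_ : β ∈ Finset.univ) => hite α β]
  rw [big n hn1 x y]
  have hconst : ∀ S : ℂ, (1 / 4 ^ (n-1) : ℂ) * ((1/4 : ℂ)^n * 4^(n-1) * S) = 1 / 4^n * S := by
    intro S
    have h40 : (4:ℂ)^(n-1) ≠ 0 := pow_ne_zero _ (by norm_num)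
    field_simp
    rw [mul_right_comm, ← mul_pow]; norm_num
  rw [hconst]
  rfl
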